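/- arXiv:2310.02073 — 4 statements merged into one kernel-verified Lean document; each statement's English description precedes it below -/
import Mathlib

section
/- Let p be an odd prime and G a finite p-group. Then η(G)/η(G)^p equals the center of G/η(G)^p. -/
/-- The subgroup generated by `p`-th powers of elements of `N`. -/
def pPow {G : Type*} [Group G] (p : ℕ) (N : Subgroup G) : Subgroup G :=
  Subgroup.closure ((fun x => x ^ p) '' (N : Set G))

theorem pPow_normal {G : Type*} [Group G] (p : ℕ) {N : Subgroup G} (hN : N.Normal) :
    (pPow p N).Normal := by
  constructor
  intro x hx g
  have h : pPow p N ≤ Subgroup.comap (MulAut.conj g).toMonoidHom (pPow p N) := by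
    rw [pPow, Subgroup.closure_le]
    rintro - ⟨n, hn, rfl⟩
    have : (MulAut.conj g) (n ^ p) = (g * n * g⁻¹) ^ p := by
      simp [MulAut.conj_apply, conj_pow]
    refine Subgroup.mem_comap.2 ?_
    show (MulAut.conj g) (n ^ p) ∈ _
    rw [this]
    exact Subgroup.subset_closure ⟨g * n * g⁻¹, hN.conj_mem n hn g, rfl⟩
  simpa using h hx

theorem normal_sSup {G : Type*} [Group G] {S : Set (Subgroup G)}
    (hS : ∀ N ∈ S, N.Normal) : (sSup S).Normal := by
  constructor
  intro x hx g
  have h : sSup S ≤ Subgroup.comap (MulAut.conj g).toMonoidHom (sSup S) := by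
    refine sSup_le fun N hN => le_trans ?_ (Subgroup.comap_mono (le_sSup hN))
    intro n hn
    exact Subgroup.mem_comap.2 (by simpa using (hS N hN).conj_mem n hn g)
  simpa using h hx

/-- The upper η-series: `η₀ = 1`, and `η_{i+1}/η_i = η(G/η_i)` is the product of all
powerfully embedded subgroups of `G/η_i`. -/
def etaUp (p : ℕ) (G : Type*) [Group G] : ℕ → Subgroup G
  | 0 => ⊥
  | i + 1 => sSup {N : Subgroup G | N.Normal ∧ ⁅N, (⊤ : Subgroup G)⁆ ≤ pPow p N ⊔ etaUp p G i}

instance etaUp_normal (p : ℕ) (G : Type*) [Group G] (i : ℕ) : (etaUp p G i).Normal := by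
  cases i with
  | zero => show (⊥ : Subgroup G).Normal; infer_instance
  | succ i => exact normal_sSup fun N hN => hN.1

/-- The powerful class of `G`. -/
noncomputable def pwc (p : ℕ) (G : Type*) [Group G] : ℕ := sInf {k | etaUp p G k = ⊤}

/-- Iterated commutator `[N, G, G, ..., G]` with `i` copies of `G`. -/
def itComm {G : Type*} [Group G] (N : Subgroup G) : ℕ → Subgroup G
  | 0 => N
  | i + 1 => ⁅itComm N i, (⊤ : Subgroup G)⁆

/-- `N` is PF-embedded in `G`: it admits a potent filtration. -/
def PFEmbedded {G : Type*} [Group G] (p : ℕ) (N : Subgroup G) : Prop :=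
  ∃ (s : ℕ) (M : ℕ → Subgroup G), M 0 = N ∧ M s = ⊥ ∧
    (∀ i, M (i + 1) ≤ M i) ∧ (∀ i, (M i).Normal) ∧
    (∀ i, ⁅M i, (⊤ : Subgroup G)⁆ ≤ M (i + 1)) ∧
    (∀ i, itComm (M i) (p - 1) ≤ pPow p (M (i + 1)))

instance instPPowEtaNormal (p : ℕ) (G : Type*) [Group G] : (pPow p (etaUp p G 1)).Normal :=
  pPow_normal p (etaUp_normal p G 1)

lemma pPow_mono {G : Type*} [Group G] (p : ℕ) {M N : Subgroup G} (h : M ≤ N) :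
    pPow p M ≤ pPow p N :=
  Subgroup.closure_mono (Set.image_mono h)

open scoped commutatorElement

lemma mem_center_quot_iff {G : Type*} [Group G] (K : Subgroup G) [K.Normal] (n : G) :
    (QuotientGroup.mk' K) n ∈ Subgroup.center (G ⧸ K) ↔ ∀ g : G, ⁅n, g⁆ ∈ K := by
  rw [Subgroup.mem_center_iff]
  constructor
  · intro h g
    rw [← QuotientGroup.eq_one_iff, ← QuotientGroup.mk'_apply, map_commutatorElement,
      commutatorElement_eq_one_iff_mul_comm]
    exact (h _).symm
  · intro h y
    obtain ⟨g, rfl⟩ := QuotientGroup.mk'_surjective K y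
    have hg := h g
    rw [← QuotientGroup.eq_one_iff, ← QuotientGroup.mk'_apply, map_commutatorElement,
      commutatorElement_eq_one_iff_mul_comm] at hg
    exact hg.symm

/-- `η(G)/η(G)^p` is the center of `G/η(G)^p`. -/
theorem eta_mod_pPow_eq_center {p : ℕ} (hp : p.Prime) (hodd : Odd p)
    {G : Type*} [Group G] [Finite G] (hG : IsPGroup p G) :
    Subgroup.map (QuotientGroup.mk' (pPow p (etaUp p G 1))) (etaUp p G 1) =
      Subgroup.center (G ⧸ pPow p (etaUp p G 1)) := by
  set η := etaUp p G 1 with hη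
  set K := pPow p η with hK
  haveI : K.Normal := instPPowEtaNormal p G
  have hdef : η = sSup {N : Subgroup G | N.Normal ∧ ⁅N, (⊤ : Subgroup G)⁆ ≤ pPow p N ⊔ etaUp p G 0} := rfl
  have hS : ∀ N ∈ {N : Subgroup G | N.Normal ∧ ⁅N, (⊤ : Subgroup G)⁆ ≤ pPow p N ⊔ etaUp p G 0},
      ⁅N, (⊤ : Subgroup G)⁆ ≤ pPow p N := by
    intro N hN
    have := hN.2
    simpa [etaUp] using this
  have hA : η ≤ Subgroup.comap (QuotientGroup.mk' K) (Subgroup.center (G ⧸ K)) := by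
    conv_lhs => rw [hdef]
    refine sSup_le fun N hN => ?_
    intro n hn
    rw [Subgroup.mem_comap, mem_center_quot_iff]
    intro g
    have h1 : ⁅n, g⁆ ∈ ⁅N, (⊤ : Subgroup G)⁆ :=
      Subgroup.commutator_mem_commutator hn (Subgroup.mem_top g)
    have hNη : N ≤ η := by rw [hdef]; exact le_sSup hN
    exact (le_trans (hS N hN) (pPow_mono p hNη)) h1
  set Z := Subgroup.comap (QuotientGroup.mk' K) (Subgroup.center (G ⧸ K)) with hZ
  have hZη : Z ≤ η := by
    conv_rhs => rw [hdef]
    refine le_sSup ⟨Subgroup.Normal.comap inferInstance _, ?_⟩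
    rw [Subgroup.commutator_le]
    intro z hz g _
    have h1 : ⁅z, g⁆ ∈ K := (mem_center_quot_iff K z).1 hz g
    exact le_sup_left (α := Subgroup G) (pPow_mono p hA h1)
  apply le_antisymm
  · exact Subgroup.map_le_iff_le_comap.2 hA
  · intro x hx
    obtain ⟨g, rfl⟩ := QuotientGroup.mk'_surjective K x
    exact ⟨g, hZη (Subgroup.mem_comap.2 hx), rfl⟩
end

section
/- Let p be an odd prime and G a finite p-group. Then for every i ≥ 0, the i-th term of the upper central series Z_i(G) is contained in η_i(G). In particular, if G is nilpotent of class c, then the powerful class of G is at most c. -/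
/-- `Z_i(G) ≤ η_i(G)` for all `i`; in particular the powerful class of a
nilpotent group is at most its nilpotency class. -/
theorem upperCentral_le_etaUp {p : ℕ} (hp : p.Prime) (hodd : Odd p)
    {G : Type*} [Group G] [Finite G] [Group.IsNilpotent G] (hG : IsPGroup p G) :
    (∀ i, upperCentralSeries G i ≤ etaUp p G i) ∧
      pwc p G ≤ Group.nilpotencyClass G := by
  have key : ∀ i, upperCentralSeries G i ≤ etaUp p G i := by
    intro i
    induction i with
    | zero => simp [upperCentralSeries, Subgroup.upperCentralSeries_zero, etaUp]
    | succ n ih =>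
        have hmem : upperCentralSeries G (n + 1) ∈
            {N : Subgroup G | N.Normal ∧ ⁅N, (⊤ : Subgroup G)⁆ ≤ pPow p N ⊔ etaUp p G n} := by
          refine ⟨(inferInstance : (Subgroup.upperCentralSeries G (n + 1)).Normal), ?_⟩
          have h1 : ⁅upperCentralSeries G (n + 1), (⊤ : Subgroup G)⁆ ≤ upperCentralSeries G n := by
            rw [Subgroup.commutator_le]
            intro x hx y _
            exact (mem_upperCentralSeries_succ_iff.1 hx) y
          exact h1.trans (ih.trans le_sup_right)
        exact le_sSup hmem
  refine ⟨key, ?_⟩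
  have htop : etaUp p G (Group.nilpotencyClass G) = ⊤ := by
    have := key (Group.nilpotencyClass G)
    rw [upperCentralSeries, Subgroup.upperCentralSeries_nilpotencyClass] at this
    exact top_le_iff.1 this
  exact Nat.sInf_le htop
end

section
/- Let p be an odd prime. Every finite p-group of powerful class less than p is a PF-group, i.e., it admits a potent filtration of itself. -/
namespace PFAux
open Subgroup
open scoped commutatorElement

variable {G : Type*} [Group G] {p : ℕ}

lemma pow_mem_pPow {N : Subgroup G} {x : G} (hx : x ∈ N) : x ^ p ∈ pPow p N :=
  Subgroup.subset_closure ⟨x, hx, rfl⟩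

lemma pPow_le {N T : Subgroup G} (h : ∀ x ∈ N, x ^ p ∈ T) : pPow p N ≤ T := by
  rw [pPow, Subgroup.closure_le]
  rintro - ⟨x, hx, rfl⟩
  exact h x hx

lemma pPow_le_self (N : Subgroup G) : pPow p N ≤ N :=
  pPow_le fun x hx => N.pow_mem hx p

lemma pPow_mono {A B : Subgroup G} (h : A ≤ B) : pPow p A ≤ pPow p B :=
  pPow_le fun x hx => pow_mem_pPow (h hx)

/-- The subgroup of elements whose commutator with everything lands in a normal subgroup `T`. -/
def commInto (T : Subgroup G) (hT : T.Normal) : Subgroup G where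
  carrier := {g | ∀ t : G, ⁅g, t⁆ ∈ T}
  one_mem' := by
    intro t
    have : ⁅(1 : G), t⁆ = 1 := by group
    rw [this]; exact T.one_mem
  mul_mem' := by
    intro a b ha hb t
    have : ⁅a * b, t⁆ = a * ⁅b, t⁆ * a⁻¹ * ⁅a, t⁆ := by group
    rw [this]
    exact T.mul_mem (hT.conj_mem _ (hb t) a) (ha t)
  inv_mem' := by
    intro a ha t
    have h1 : ⁅a⁻¹, t⁆ = a⁻¹ * ⁅a, t⁆⁻¹ * a⁻¹⁻¹ := by group
    rw [h1]
    exact hT.conj_mem _ (T.inv_mem (ha t)) a⁻¹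

lemma commutator_top_le_of_le_commInto {H T : Subgroup G} (hT : T.Normal)
    (h : H ≤ commInto T hT) : ⁅H, (⊤ : Subgroup G)⁆ ≤ T :=
  Subgroup.commutator_le.mpr fun g hg t _ => (h hg) t

lemma le_commInto_of_commutator {H T : Subgroup G} (hT : T.Normal)
    (h : ⁅H, (⊤ : Subgroup G)⁆ ≤ T) : H ≤ commInto T hT :=
  fun {g} hg t => h (commutator_mem_commutator hg (mem_top t))

lemma commutator_top_iSup_le {ι : Sort*} {f : ι → Subgroup G} {T : Subgroup G} (hT : T.Normal)
    (h : ∀ i, ⁅f i, (⊤ : Subgroup G)⁆ ≤ T) : ⁅(⨆ i, f i), (⊤ : Subgroup G)⁆ ≤ T :=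
  commutator_top_le_of_le_commInto hT (iSup_le fun i => le_commInto_of_commutator hT (h i))

lemma commutator_top_sup_le {A B T : Subgroup G} (hT : T.Normal)
    (hA : ⁅A, (⊤ : Subgroup G)⁆ ≤ T) (hB : ⁅B, (⊤ : Subgroup G)⁆ ≤ T) :
    ⁅A ⊔ B, (⊤ : Subgroup G)⁆ ≤ T :=
  commutator_top_le_of_le_commInto hT
    (sup_le (le_commInto_of_commutator hT hA) (le_commInto_of_commutator hT hB))

lemma iSup_normal {ι : Sort*} {f : ι → Subgroup G} (h : ∀ i, (f i).Normal) :
    (⨆ i, f i).Normal := by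
  constructor
  intro n hn g
  have hle : (⨆ i, f i) ≤ Subgroup.comap (MulAut.conj g).toMonoidHom (⨆ i, f i) := by
    refine iSup_le fun i => ?_
    refine le_trans ?_ (Subgroup.comap_mono (le_iSup f i))
    intro x hx
    exact Subgroup.mem_comap.2 (by simpa using (h i).conj_mem x hx g)
  simpa using hle hn

lemma comm_zpow_aux {K : Type*} [Group K] (a b : K)
    (hw : ∀ g : K, Commute ⁅⁅a, b⁆⁻¹, a⁆ g) (n : ℕ) :
    ⁅⁅a, b⁆⁻¹, a ^ n⁆ = ⁅⁅a, b⁆⁻¹, a⁆ ^ n := by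
  induction n with
  | zero => simp [commutatorElement_def]; group
  | succ i ih =>
    have h1 : ⁅⁅a, b⁆⁻¹, a ^ (i + 1)⁆ = ⁅⁅a, b⁆⁻¹, a⁆ * (a * ⁅⁅a, b⁆⁻¹, a ^ i⁆ * a⁻¹) := by
      rw [pow_succ']; group
    rw [h1, ih]
    have h2 : a * ⁅⁅a, b⁆⁻¹, a⁆ ^ i * a⁻¹ = ⁅⁅a, b⁆⁻¹, a⁆ ^ i := by
      have := ((hw a).pow_left i).eq
      rw [← this]; group
    rw [h2, ← pow_succ']

lemma comm_pow_eq {K : Type*} [Group K] (a b : K)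
    (hw : ∀ g : K, Commute ⁅⁅a, b⁆⁻¹, a⁆ g) (n : ℕ) :
    ⁅a ^ n, b⁆ = ⁅a, b⁆ ^ n * ⁅⁅a, b⁆⁻¹, a⁆ ^ (∑ i ∈ Finset.range n, i) := by
  set z := ⁅a, b⁆ with hz
  set w := ⁅z⁻¹, a⁆ with hwdef
  induction n with
  | zero => simp [commutatorElement_def]
  | succ n ih =>
    have h1 : ⁅a ^ (n + 1), b⁆ = (a ^ n * z * (a ^ n)⁻¹) * ⁅a ^ n, b⁆ := by
      rw [hz, pow_succ']; group
    have h2 : a ^ n * z * (a ^ n)⁻¹ = z * ⁅z⁻¹, a ^ n⁆ := by group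
    rw [h1, h2, comm_zpow_aux a b hw, ih, Finset.sum_range_succ]
    have hcomm : ∀ m l : ℕ, w ^ m * z ^ l = z ^ l * w ^ m := fun m l => ((hw (z ^ l)).pow_left m).eq
    calc z * w ^ n * (z ^ n * w ^ (∑ i ∈ Finset.range n, i))
        = z * (w ^ n * z ^ n) * w ^ (∑ i ∈ Finset.range n, i) := by group
      _ = z * (z ^ n * w ^ n) * w ^ (∑ i ∈ Finset.range n, i) := by rw [hcomm]
      _ = z ^ (n + 1) * w ^ ((∑ i ∈ Finset.range n, i) + n) := by rw [pow_succ']; group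

/-- Key commutator lemma: for `p` odd and `X` normal,
`[X^p, G] ≤ [X,G]^p ⊔ [[[X,G],G],G]`. -/
lemma key_comm {k : ℕ} (hpk : p = 2 * k + 1) {X : Subgroup G} (hX : X.Normal) :
    ⁅pPow p X, (⊤ : Subgroup G)⁆ ≤
      pPow p ⁅X, (⊤ : Subgroup G)⁆ ⊔
        ⁅⁅⁅X, (⊤ : Subgroup G)⁆, (⊤ : Subgroup G)⁆, (⊤ : Subgroup G)⁆ := by
  set CX : Subgroup G := ⁅X, (⊤ : Subgroup G)⁆ with hCX
  haveI hCXn : CX.Normal := inferInstance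
  set T : Subgroup G := pPow p CX ⊔ ⁅⁅CX, (⊤ : Subgroup G)⁆, (⊤ : Subgroup G)⁆ with hTdef
  haveI hTn : T.Normal := by
    haveI h1 : (pPow p CX).Normal := pPow_normal p inferInstance
    exact Subgroup.sup_normal _ _
  show ⁅pPow p X, (⊤ : Subgroup G)⁆ ≤ T
  refine commutator_top_le_of_le_commInto hTn (pPow_le fun x hx => ?_)
  intro t
  let π : G →* G ⧸ T := QuotientGroup.mk' T
  have hker : ∀ {g : G}, g ∈ T → π g = 1 := fun {g} hg => (QuotientGroup.eq_one_iff g).mpr hg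
  have hD : (⁅⁅x, t⁆⁻¹, x⁆ : G) ∈ ⁅CX, X⁆ :=
    commutator_mem_commutator (CX.inv_mem (commutator_mem_commutator hx (mem_top t))) hx
  have hDCX : (⁅CX, X⁆ : Subgroup G) ≤ CX :=
    le_trans (commutator_mono le_rfl le_top) (commutator_le_left _ _)
  have hcen : ∀ g : G ⧸ T, Commute (π ⁅⁅x, t⁆⁻¹, x⁆) g := by
    intro g
    obtain ⟨y, rfl⟩ := QuotientGroup.mk'_surjective T g
    rw [← commutatorElement_eq_one_iff_commute, ← map_commutatorElement]
    refine hker (Subgroup.mem_sup_right ?_)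
    exact commutator_mono (commutator_mono le_rfl le_top) le_rfl
      (commutator_mem_commutator hD (mem_top y))
  -- now compute `π ⁅x^p, t⁆`
  have hwform : π ⁅⁅x, t⁆⁻¹, x⁆ = ⁅⁅π x, π t⁆⁻¹, π x⁆ := by
    simp [map_commutatorElement]
  have hcen' : ∀ g : G ⧸ T, Commute ⁅⁅π x, π t⁆⁻¹, π x⁆ g := by
    rw [← hwform]; exact hcen
  have hmain := comm_pow_eq (π x) (π t) hcen' p
  have hsum : (∑ i ∈ Finset.range p, i) = k * p := by
    have h1 : p - 1 = 2 * k := by omega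
    have h2 : (∑ i ∈ Finset.range p, i) * 2 = (k * p) * 2 := by
      rw [Finset.sum_range_id_mul_two, h1, hpk]; ring
    exact Nat.eq_of_mul_eq_mul_right (by norm_num) h2
  have hz : ⁅π x, π t⁆ ^ p = 1 := by
    rw [← map_commutatorElement, ← map_pow]
    exact hker (Subgroup.mem_sup_left (pow_mem_pPow (commutator_mem_commutator hx (mem_top t))))
  have hwp : ⁅⁅π x, π t⁆⁻¹, π x⁆ ^ (k * p) = 1 := by
    rw [← hwform, ← map_pow, pow_mul]
    refine hker (Subgroup.mem_sup_left (pow_mem_pPow ?_))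
    exact CX.pow_mem (hDCX hD) k
  have : π ⁅x ^ p, t⁆ = 1 := by
    rw [map_commutatorElement, map_pow, hmain, hsum, hz, hwp, one_mul]
  exact (QuotientGroup.eq_one_iff _).mp this

end PFAux


namespace PFAux2
open Subgroup PFAux

variable {G : Type*} [Group G] {p : ℕ}

lemma itComm_mono {A B : Subgroup G} (h : A ≤ B) : ∀ m, itComm A m ≤ itComm B m
  | 0 => h
  | m + 1 => commutator_mono (itComm_mono h m) le_rfl

lemma itComm_succ_inner (A : Subgroup G) : ∀ m, itComm A (m + 1) = itComm ⁅A, (⊤ : Subgroup G)⁆ m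
  | 0 => rfl
  | m + 1 => by
    show ⁅itComm A (m + 1), (⊤ : Subgroup G)⁆ = ⁅itComm ⁅A, ⊤⁆ m, (⊤ : Subgroup G)⁆
    rw [itComm_succ_inner A m]

lemma itComm_normal {A : Subgroup G} (hA : A.Normal) : ∀ m, (itComm A m).Normal
  | 0 => hA
  | m + 1 => by
    haveI := itComm_normal hA m
    show (⁅itComm A m, (⊤ : Subgroup G)⁆).Normal
    infer_instance

lemma itComm_le_self {A : Subgroup G} (hA : A.Normal) : ∀ m, itComm A m ≤ A
  | 0 => le_rfl
  | m + 1 => by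
    haveI := itComm_normal hA m
    exact le_trans (commutator_le_left _ _) (itComm_le_self hA m)

lemma itComm_bot : ∀ m, itComm (⊥ : Subgroup G) m = ⊥
  | 0 => rfl
  | m + 1 => by
    show ⁅itComm (⊥ : Subgroup G) m, (⊤ : Subgroup G)⁆ = ⊥
    rw [itComm_bot m, commutator_bot_left]

lemma itComm_top_eq (m : ℕ) : itComm (⊤ : Subgroup G) m = Subgroup.lowerCentralSeries (⊤ : Subgroup G) m := by
  induction m with
  | zero => rfl
  | succ m ih =>
    show ⁅itComm (⊤ : Subgroup G) m, (⊤ : Subgroup G)⁆ = _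
    rw [ih]; rfl

lemma itComm_iSup_le {ι : Sort*} {f : ι → Subgroup G} (hf : ∀ i, (f i).Normal) (m : ℕ) :
    itComm (⨆ i, f i) m ≤ ⨆ i, itComm (f i) m := by
  induction m with
  | zero => exact le_rfl
  | succ m ih =>
    show ⁅itComm (⨆ i, f i) m, (⊤ : Subgroup G)⁆ ≤ _
    refine le_trans (commutator_mono ih le_rfl) ?_
    refine commutator_top_iSup_le (PFAux.iSup_normal fun i => itComm_normal (hf i) (m + 1)) ?_
    intro i
    exact le_iSup (fun i => itComm (f i) (m + 1)) i
  -- note: ⁅itComm (f i) m, ⊤⁆ = itComm (f i) (m+1) definitionally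

lemma itComm_sup_le {A B : Subgroup G} (hA : A.Normal) (hB : B.Normal) (m : ℕ) :
    itComm (A ⊔ B) m ≤ itComm A m ⊔ itComm B m := by
  induction m with
  | zero => exact le_rfl
  | succ m ih =>
    show ⁅itComm (A ⊔ B) m, (⊤ : Subgroup G)⁆ ≤ _
    refine le_trans (commutator_mono ih le_rfl) ?_
    refine commutator_top_sup_le ?_ ?_ ?_
    · haveI := itComm_normal hA (m+1); haveI := itComm_normal hB (m+1)
      exact Subgroup.sup_normal _ _
    · exact le_sup_left
    · exact le_sup_right

/-- The lambda operator: `λ(X) = X^p [X,G]`. -/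
def lam (p : ℕ) {G : Type*} [Group G] (X : Subgroup G) : Subgroup G :=
  pPow p X ⊔ ⁅X, (⊤ : Subgroup G)⁆

lemma lam_normal {X : Subgroup G} (hX : X.Normal) : (lam p X).Normal := by
  haveI := hX
  haveI h1 : (pPow p X).Normal := pPow_normal p hX
  exact Subgroup.sup_normal _ _

lemma lam_le_self {X : Subgroup G} (hX : X.Normal) : lam p X ≤ X := by
  haveI := hX
  exact sup_le (pPow_le_self X) (commutator_le_left _ _)

lemma lam_mono {A B : Subgroup G} (h : A ≤ B) : lam p A ≤ lam p B :=
  sup_le (le_trans (pPow_mono h) le_sup_left) (le_trans (commutator_mono h le_rfl) le_sup_right)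

lemma lamIter_normal {X : Subgroup G} (hX : X.Normal) : ∀ t, ((lam p)^[t] X).Normal
  | 0 => hX
  | t + 1 => by
    rw [Function.iterate_succ_apply']
    exact lam_normal (lamIter_normal hX t)

lemma lamIter_le_self {X : Subgroup G} (hX : X.Normal) : ∀ t, (lam p)^[t] X ≤ X
  | 0 => le_rfl
  | t + 1 => by
    rw [Function.iterate_succ_apply']
    exact le_trans (lam_le_self (lamIter_normal hX t)) (lamIter_le_self hX t)

lemma lamIter_mono {A B : Subgroup G} (h : A ≤ B) (t : ℕ) : (lam p)^[t] A ≤ (lam p)^[t] B := by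
  induction t with
  | zero => exact h
  | succ t ih => rw [Function.iterate_succ_apply', Function.iterate_succ_apply']; exact lam_mono ih

lemma lamIter_antitone {X : Subgroup G} (hX : X.Normal) {a b : ℕ} (h : a ≤ b) :
    (lam p)^[b] X ≤ (lam p)^[a] X := by
  obtain ⟨d, rfl⟩ := Nat.exists_eq_add_of_le h
  rw [Nat.add_comm, Function.iterate_add_apply]
  exact lamIter_le_self (lamIter_normal hX a) d

lemma itComm_le_lamIter {X : Subgroup G} (hX : X.Normal) : ∀ m, itComm X m ≤ (lam p)^[m] X
  | 0 => le_rfl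
  | m + 1 => by
    rw [Function.iterate_succ_apply']
    show ⁅itComm X m, (⊤ : Subgroup G)⁆ ≤ lam p ((lam p)^[m] X)
    exact le_trans (commutator_mono (itComm_le_lamIter hX m) le_rfl) le_sup_right

/-- ML2: `[X^p, G, ..., G] (m copies) ≤ (itComm X m)^p ⊔ itComm X (m+2)`. -/
lemma ML2 {k : ℕ} (hpk : p = 2 * k + 1) :
    ∀ (m : ℕ) {X : Subgroup G} (hX : X.Normal),
      itComm (pPow p X) m ≤ pPow p (itComm X m) ⊔ itComm X (m + 2)
  | 0, X, hX => le_sup_left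
  | m + 1, X, hX => by
    haveI := hX
    have h1 : itComm (pPow p X) (m + 1) = itComm ⁅pPow p X, (⊤ : Subgroup G)⁆ m :=
      itComm_succ_inner _ _
    rw [h1]
    have h2 := key_comm hpk hX
    refine le_trans (itComm_mono h2 m) ?_
    have hCX : (⁅X, (⊤ : Subgroup G)⁆).Normal := inferInstance
    have h3 : (⁅⁅⁅X, (⊤:Subgroup G)⁆, (⊤:Subgroup G)⁆, (⊤:Subgroup G)⁆ : Subgroup G).Normal := inferInstance
    refine le_trans (itComm_sup_le (pPow_normal p hCX) h3 m) ?_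
    refine sup_le ?_ ?_
    · refine le_trans (ML2 hpk m hCX) ?_
      refine sup_le ?_ ?_
      · refine le_trans (pPow_mono ?_) le_sup_left
        rw [itComm_succ_inner X m]
      · refine le_trans ?_ le_sup_right
        have : itComm ⁅X, (⊤ : Subgroup G)⁆ (m + 2) = itComm X (m + 3) := by
          rw [itComm_succ_inner X (m+2)]
        rw [this]
    · refine le_trans ?_ le_sup_right
      have : itComm (⁅⁅⁅X, (⊤:Subgroup G)⁆, (⊤:Subgroup G)⁆, (⊤:Subgroup G)⁆) m = itComm X (m + 3) := by
        rw [itComm_succ_inner X (m+2), itComm_succ_inner ⁅X,(⊤:Subgroup G)⁆ (m+1),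
          itComm_succ_inner ⁅⁅X,(⊤:Subgroup G)⁆,(⊤:Subgroup G)⁆ m]
      rw [this]

end PFAux2


namespace PFAux3
open Subgroup PFAux PFAux2
open scoped commutatorElement

variable {p : ℕ}

/-- In a finite `p`-group, an "abelian" subgroup contained in its own `p`-power subgroup
is trivial. -/
lemma abelian_pPow_eq_bot {Q : Type*} [Group Q] [Finite Q] (hp : p.Prime) (hQ : IsPGroup p Q)
    {A : Subgroup Q} (hcomm : ∀ a ∈ A, ∀ b ∈ A, Commute a b) (hA : A ≤ pPow p A) : A = ⊥ := by
  haveI : Fact p.Prime := ⟨hp⟩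
  -- the set of p-th powers of elements of A is a subgroup
  let T : Subgroup Q :=
    { carrier := (fun x => x ^ p) '' (A : Set Q)
      one_mem' := ⟨1, A.one_mem, one_pow p⟩
      mul_mem' := by
        rintro - - ⟨x, hx, rfl⟩ ⟨y, hy, rfl⟩
        exact ⟨x * y, A.mul_mem hx hy, by simpa using (hcomm x hx y hy).mul_pow p⟩
      inv_mem' := by
        rintro - ⟨x, hx, rfl⟩
        exact ⟨x⁻¹, A.inv_mem hx, by simpa using inv_pow x p⟩ }
  have hAT : ∀ a ∈ A, ∃ b ∈ A, b ^ p = a := by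
    intro a ha
    have : a ∈ T := by
      refine (Subgroup.closure_le T).mpr ?_ (hA ha)
      exact le_rfl
    obtain ⟨b, hb, hb2⟩ := this
    exact ⟨b, hb, hb2⟩
  have hiter : ∀ m, ∀ a ∈ A, ∃ b ∈ A, b ^ (p ^ m) = a := by
    intro m
    induction m with
    | zero => exact fun a ha => ⟨a, ha, by simp⟩
    | succ m ih =>
      intro a ha
      obtain ⟨b, hb, rfl⟩ := hAT a ha
      obtain ⟨c, hc, rfl⟩ := ih b hb
      exact ⟨c, hc, by rw [← pow_mul, pow_succ]⟩
  obtain ⟨n, hn⟩ := IsPGroup.iff_card.mp hQ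
  rw [eq_bot_iff]
  intro a ha
  obtain ⟨b, hb, rfl⟩ := hiter n a ha
  rw [Subgroup.mem_bot, ← hn, pow_card_eq_one']

/-- Frattini-type argument: in a finite `p`-group, a normal subgroup `X` with
`X ≤ X^p [X,G]` is trivial. -/
lemma frattini_bot {G : Type*} [Group G] [Finite G] (hp : p.Prime) (hG : IsPGroup p G)
    {X : Subgroup G} (hX : X.Normal) (h : X ≤ lam p X) : X = ⊥ := by
  haveI : Fact p.Prime := ⟨hp⟩
  haveI := hX
  obtain ⟨n₀, hn₀⟩ := Subgroup.nilpotent_iff_lowerCentralSeries.mp (IsPGroup.isNilpotent hG)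
  have key : ∀ n, X ≤ Subgroup.lowerCentralSeries (⊤ : Subgroup G) n := by
    intro n
    induction n with
    | zero => exact le_top
    | succ n ih =>
      set Γ := Subgroup.lowerCentralSeries (⊤ : Subgroup G) (n + 1) with hΓ
      haveI : Γ.Normal := Subgroup.lowerCentralSeries_normal ⊤ (n + 1)
      set π : G →* G ⧸ Γ := QuotientGroup.mk' Γ with hπ
      have hker : π.ker = Γ := QuotientGroup.ker_mk' Γ
      set A : Subgroup (G ⧸ Γ) := Subgroup.map π X with hA
      have hcomm : ∀ a ∈ A, ∀ b ∈ A, Commute a b := by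
        rintro - ⟨u, hu, rfl⟩ - ⟨v, hv, rfl⟩
        rw [← commutatorElement_eq_one_iff_commute, ← map_commutatorElement,
          ← MonoidHom.mem_ker, hker]
        have : (⁅u, v⁆ : G) ∈ ⁅Subgroup.lowerCentralSeries (⊤ : Subgroup G) n, (⊤ : Subgroup G)⁆ :=
          commutator_mem_commutator (ih hu) (mem_top v)
        exact this
      have hmapP : Subgroup.map π (pPow p X) = pPow p A := by
        rw [pPow, MonoidHom.map_closure, pPow]
        congr 1
        rw [Set.image_image, hA]
        ext y
        constructor
        · rintro ⟨x, hx, rfl⟩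
          exact ⟨π x, ⟨x, hx, rfl⟩, (map_pow π x p).symm⟩
        · rintro ⟨-, ⟨x, hx, rfl⟩, rfl⟩
          exact ⟨x, hx, map_pow π x p⟩
      have hApow : A ≤ pPow p A := by
        have h1 : Subgroup.map π X ≤ Subgroup.map π (lam p X) := Subgroup.map_mono h
        rw [lam, Subgroup.map_sup, hmapP] at h1
        have h2 : Subgroup.map π ⁅X, (⊤ : Subgroup G)⁆ = ⊥ := by
          rw [Subgroup.map_eq_bot_iff, hker]
          exact le_trans (commutator_mono ih le_rfl) le_rfl
        rw [h2, sup_bot_eq] at h1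
        exact h1
      have hAbot : A = ⊥ :=
        abelian_pPow_eq_bot hp (hG.to_quotient Γ) hcomm hApow
      rw [hA, Subgroup.map_eq_bot_iff, hker] at hAbot
      exact hAbot
  exact le_bot_iff.mp (hn₀ ▸ key n₀)

/-- The `λ`-iteration of any normal subgroup reaches `⊥`. -/
lemma exists_lamIter_bot {G : Type*} [Group G] [Finite G] (hp : p.Prime) (hG : IsPGroup p G)
    {X : Subgroup G} (hX : X.Normal) : ∃ s, (lam p)^[s] X = ⊥ := by
  have : ∃ a b, a < b ∧ (lam p)^[a] X = (lam p)^[b] X := by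
    obtain ⟨a, b, hab, h⟩ := Finite.exists_ne_map_eq_of_infinite (fun n : ℕ => (lam p)^[n] X)
    rcases lt_or_gt_of_ne hab with h' | h'
    · exact ⟨a, b, h', h⟩
    · exact ⟨b, a, h', h.symm⟩
  obtain ⟨a, b, hab, h⟩ := this
  have hfix : (lam p)^[a + 1] X = (lam p)^[a] X := by
    refine le_antisymm (lamIter_antitone hX (Nat.le_succ a)) ?_
    calc (lam p)^[a] X = (lam p)^[b] X := h
      _ ≤ (lam p)^[a + 1] X := lamIter_antitone hX hab
  refine ⟨a, frattini_bot hp hG (lamIter_normal hX a) ?_⟩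
  conv_lhs => rw [← hfix]
  rw [Function.iterate_succ_apply']

end PFAux3


namespace PFAux4
open Subgroup PFAux PFAux2 PFAux3
open scoped commutatorElement

variable {p : ℕ} {G : Type*} [Group G]

lemma eta_mono_succ (j : ℕ) : etaUp p G j ≤ etaUp p G (j + 1) := by
  have hmem : etaUp p G j ∈ {N : Subgroup G |
      N.Normal ∧ ⁅N, (⊤ : Subgroup G)⁆ ≤ pPow p N ⊔ etaUp p G j} := by
    refine ⟨etaUp_normal p G j, ?_⟩
    haveI := etaUp_normal p G j
    exact le_trans (commutator_le_left _ _) le_sup_right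
  exact le_sSup hmem

lemma eta_mono : Monotone (etaUp p G) :=
  monotone_nat_of_le_succ eta_mono_succ

lemma eta_pe (j : ℕ) :
    ⁅etaUp p G j, (⊤ : Subgroup G)⁆ ≤ pPow p (etaUp p G j) ⊔ etaUp p G (j - 1) := by
  cases j with
  | zero =>
    show ⁅(⊥ : Subgroup G), (⊤ : Subgroup G)⁆ ≤ _
    rw [commutator_bot_left]; exact bot_le
  | succ j =>
    have hT : (pPow p (etaUp p G (j+1)) ⊔ etaUp p G j).Normal := by
      haveI h1 : (pPow p (etaUp p G (j+1))).Normal := pPow_normal p (etaUp_normal p G (j+1))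
      haveI h2 := etaUp_normal p G j
      exact Subgroup.sup_normal _ _
    have hle : ∀ N ∈ {N : Subgroup G |
        N.Normal ∧ ⁅N, (⊤ : Subgroup G)⁆ ≤ pPow p N ⊔ etaUp p G j},
        N ≤ commInto _ hT := by
      rintro N ⟨hN1, hN2⟩
      refine le_commInto_of_commutator hT (le_trans hN2 (sup_le ?_ le_sup_right))
      have hNle : N ≤ etaUp p G (j + 1) := le_sSup (⟨hN1, hN2⟩ :
        N ∈ {N : Subgroup G | N.Normal ∧ ⁅N, (⊤ : Subgroup G)⁆ ≤ pPow p N ⊔ etaUp p G j})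
      exact le_trans (pPow_mono hNle) le_sup_left
    exact commutator_top_le_of_le_commInto hT (sSup_le hle)

lemma eta_reaches [Finite G] (hp : p.Prime) (hG : IsPGroup p G) :
    ∃ k, etaUp p G k = ⊤ := by
  haveI : Fact p.Prime := ⟨hp⟩
  by_contra hcon
  push_neg at hcon
  have hstrict : ∀ k, etaUp p G k < etaUp p G (k + 1) := by
    intro k
    set K := etaUp p G k with hK
    haveI hKn : K.Normal := etaUp_normal p G k
    haveI : Nontrivial (G ⧸ K) := by
      obtain ⟨g, hg⟩ : ∃ g, g ∉ K := by
        by_contra hh; push_neg at hh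
        exact hcon k ((Subgroup.eq_top_iff' K).mpr hh)
      exact ⟨⟨(g : G ⧸ K), 1, by simpa [Ne, QuotientGroup.eq_one_iff] using hg⟩⟩
    haveI := hG.to_quotient K
    haveI : Nontrivial (Subgroup.center (G ⧸ K)) :=
      IsPGroup.center_nontrivial (hG.to_quotient K)
    obtain ⟨⟨z, hz⟩, hzne⟩ := exists_ne (1 : Subgroup.center (G ⧸ K))
    have hzne' : z ≠ 1 := by
      simpa [Subtype.ext_iff] using hzne
    obtain ⟨g₀, rfl⟩ := QuotientGroup.mk'_surjective K z
    set N : Subgroup G := Subgroup.comap (QuotientGroup.mk' K) (Subgroup.center (G ⧸ K)) with hN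
    have hN1 : N.Normal := Subgroup.Normal.comap inferInstance _
    have hN2 : ⁅N, (⊤ : Subgroup G)⁆ ≤ pPow p N ⊔ K := by
      refine le_trans ?_ le_sup_right
      refine Subgroup.commutator_le.mpr fun n hn t _ => ?_
      have hcomm : Commute ((QuotientGroup.mk' K) n) ((QuotientGroup.mk' K) t) :=
        ((Subgroup.mem_center_iff.mp (Subgroup.mem_comap.mp hn)) _).symm
      have h1 : (QuotientGroup.mk' K) ⁅n, t⁆ = 1 := by
        rw [map_commutatorElement]
        exact commutatorElement_eq_one_iff_commute.mpr hcomm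
      rw [QuotientGroup.mk'_apply] at h1
      exact (QuotientGroup.eq_one_iff _).mp h1
    have hNle : N ≤ etaUp p G (k + 1) := le_sSup ⟨hN1, hN2⟩
    refine lt_of_le_of_ne (eta_mono_succ k) ?_
    intro heq
    have hg₀N : g₀ ∈ N := Subgroup.mem_comap.mpr hz
    have hg₀K : g₀ ∉ K := by
      intro hmem
      exact hzne' ((QuotientGroup.eq_one_iff g₀).mpr hmem)
    exact hg₀K (heq ▸ hNle hg₀N)
  have hSM : StrictMono (etaUp p G) := strictMono_nat_of_lt_succ hstrict
  exact (Finite.of_injective _ hSM.injective).not_infinite inferInstance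

end PFAux4


namespace PFAux5
open Subgroup PFAux PFAux2 PFAux3 PFAux4

variable {p : ℕ} {G : Type*} [Group G]

/-- The right-hand side of the master lemma. -/
def MLrhs (p : ℕ) (G : Type*) [Group G] (j t m : ℕ) : Subgroup G :=
  (⨆ r : Fin (j + 1), pPow p ((lam p)^[t + m - 1 - (j - (r : ℕ))] (etaUp p G r))) ⊔
    etaUp p G (j - m - t)

lemma MLrhs_normal (j t m : ℕ) : (MLrhs p G j t m).Normal := by
  haveI h1 : (⨆ r : Fin (j + 1),
      pPow p ((lam p)^[t + m - 1 - (j - (r : ℕ))] (etaUp p G r))).Normal :=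
    PFAux.iSup_normal fun r => pPow_normal p (lamIter_normal (etaUp_normal p G r) _)
  haveI h2 := etaUp_normal p G (j - m - t)
  exact Subgroup.sup_normal _ _

lemma pPow_le_MLrhs {j t m r lev : ℕ} (hr : r < j + 1) (hlev : t + m - 1 - (j - r) ≤ lev) :
    pPow p ((lam p)^[lev] (etaUp p G r)) ≤ MLrhs p G j t m := by
  refine le_trans (pPow_mono (lamIter_antitone (etaUp_normal p G r) hlev)) ?_
  exact le_trans (le_iSup_of_le (⟨r, hr⟩ : Fin (j + 1)) le_rfl) le_sup_left

lemma eta_le_MLrhs {j t m e : ℕ} (he : e ≤ j - m - t) : etaUp p G e ≤ MLrhs p G j t m :=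
  le_trans (eta_mono he) le_sup_right

lemma MLrhs_le_MLrhs {j t m t' m' : ℕ}
    (h1 : ∀ r, r ≤ j → t' + m' - 1 - (j - r) ≤ t + m - 1 - (j - r))
    (h2 : j - m - t ≤ j - m' - t') :
    MLrhs p G j t m ≤ MLrhs p G j t' m' := by
  refine sup_le (iSup_le fun r => ?_) (eta_le_MLrhs h2)
  exact pPow_le_MLrhs r.isLt (h1 r (Nat.lt_succ_iff.mp r.isLt))

/-- Master lemma, case `t = 0`. -/
lemma ML0 {k : ℕ} (hpk : p = 2 * k + 1) {n₀ : ℕ}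
    (hn₀ : Subgroup.lowerCentralSeries (⊤ : Subgroup G) n₀ = ⊥) :
    ∀ j m, itComm (etaUp p G j) m ≤ MLrhs p G j 0 m := by
  have base : ∀ j m, n₀ ≤ m → itComm (etaUp p G j) m ≤ MLrhs p G j 0 m := by
    intro j m hm
    have h1 : itComm (etaUp p G j) m ≤ Subgroup.lowerCentralSeries (⊤ : Subgroup G) m :=
      le_trans (itComm_mono le_top m) (le_of_eq (itComm_top_eq m))
    have h2 : Subgroup.lowerCentralSeries (⊤ : Subgroup G) m ≤ ⊥ := hn₀ ▸ Subgroup.lowerCentralSeries_antitone ⊤ hm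
    exact le_trans h1 (le_trans h2 bot_le)
  intro j
  induction j using Nat.strong_induction_on with
  | _ j ihj =>
    suffices h : ∀ d m, n₀ ≤ m + d → itComm (etaUp p G j) m ≤ MLrhs p G j 0 m by
      intro m; exact h n₀ m (by omega)
    intro d
    induction d with
    | zero => intro m hm; exact base j m (by omega)
    | succ d ihd =>
      intro m hm
      by_cases hmn : n₀ ≤ m
      · exact base j m hmn
      · match m with
        | 0 =>
          -- itComm X 0 = X = η j; bare term is η (j - 0 - 0) = η j
          exact eta_le_MLrhs (by omega)
        | (m + 1) =>
          cases j with
          | zero =>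
            have : etaUp p G 0 = (⊥ : Subgroup G) := rfl
            rw [this, itComm_bot]
            exact bot_le
          | succ j' =>
            have step1 : itComm (etaUp p G (j' + 1)) (m + 1)
                = itComm ⁅etaUp p G (j' + 1), (⊤ : Subgroup G)⁆ m :=
              itComm_succ_inner _ _
            rw [step1]
            have step2 := eta_pe (p := p) (G := G) (j' + 1)
            rw [Nat.add_sub_cancel] at step2
            refine le_trans (itComm_mono step2 m) ?_
            have hnorm1 : (pPow p (etaUp p G (j' + 1))).Normal :=
              pPow_normal p (etaUp_normal p G (j' + 1))
            refine le_trans (itComm_sup_le hnorm1 (etaUp_normal p G j') m) ?_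
            refine sup_le ?_ ?_
            · -- itComm (pPow (η (j'+1))) m
              refine le_trans (ML2 hpk m (etaUp_normal p G (j' + 1))) ?_
              refine sup_le ?_ ?_
              · -- pPow (itComm (η (j'+1)) m) ≤ pPow (lam^[m] (η (j'+1)))
                refine le_trans (pPow_mono (itComm_le_lamIter (p := p) (etaUp_normal p G (j' + 1)) m)) ?_
                exact pPow_le_MLrhs (by omega) (by omega)
              · -- itComm (η (j'+1)) (m+2) : use ihd at m+2
                refine le_trans (ihd (m + 2) (by omega)) ?_
                exact MLrhs_le_MLrhs (fun r hr => by omega) (by omega)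
            · -- itComm (η j') m : use ihj
              refine le_trans (ihj j' (by omega) m) ?_
              -- MLrhs j' 0 m ≤ MLrhs (j'+1) 0 (m+1)
              refine sup_le (iSup_le fun r => ?_) ?_
              · refine pPow_le_MLrhs (r := (r : ℕ)) (by omega) ?_
                have hrle : (r : ℕ) ≤ j' := Nat.lt_succ_iff.mp r.isLt
                omega
              · exact eta_le_MLrhs (by omega)

/-- Master lemma. -/
lemma ML {k : ℕ} (hpk : p = 2 * k + 1) {n₀ : ℕ}
    (hn₀ : Subgroup.lowerCentralSeries (⊤ : Subgroup G) n₀ = ⊥) :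
    ∀ t j m, itComm ((lam p)^[t] (etaUp p G j)) m ≤ MLrhs p G j t m := by
  intro t
  induction t with
  | zero => exact ML0 hpk hn₀
  | succ t iht =>
    intro j m
    rw [Function.iterate_succ_apply']
    have hA : ((lam p)^[t] (etaUp p G j)).Normal := lamIter_normal (etaUp_normal p G j) t
    haveI := hA
    have hsplit : lam p ((lam p)^[t] (etaUp p G j))
        = pPow p ((lam p)^[t] (etaUp p G j)) ⊔ ⁅(lam p)^[t] (etaUp p G j), (⊤ : Subgroup G)⁆ :=
      rfl
    rw [hsplit]
    refine le_trans (itComm_sup_le (pPow_normal p hA) inferInstance m) ?_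
    refine sup_le ?_ ?_
    · -- itComm (pPow A) m
      refine le_trans (ML2 hpk m hA) ?_
      refine sup_le ?_ ?_
      · -- pPow (itComm A m) ≤ pPow (lam^[m+t] (η j))
        refine le_trans (pPow_mono (itComm_le_lamIter (p := p) hA m)) ?_
        rw [← Function.iterate_add_apply]
        exact pPow_le_MLrhs (by omega) (by omega)
      · -- itComm A (m+2)
        refine le_trans (iht j (m + 2)) ?_
        exact MLrhs_le_MLrhs (fun r hr => by omega) (by omega)
    · -- itComm ⁅A,⊤⁆ m = itComm A (m+1)
      rw [← itComm_succ_inner]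
      refine le_trans (iht j (m + 1)) ?_
      exact MLrhs_le_MLrhs (fun r hr => by omega) (by omega)

end PFAux5


open Subgroup PFAux PFAux2 PFAux3 PFAux4 PFAux5 in
set_option maxHeartbeats 1600000 in
/-- every finite `p`-group of powerful class less than `p` is a PF-group. -/
theorem small_pwc_PFGroup {p : ℕ} (hp : p.Prime) (hodd : Odd p)
    {G : Type*} [Group G] [Finite G] (hG : IsPGroup p G) (hsmall : pwc p G < p) :
    PFEmbedded p (⊤ : Subgroup G) := by
  haveI : Fact p.Prime := ⟨hp⟩
  obtain ⟨k, hpk⟩ := hodd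
  have hp3 : 3 ≤ p := by have := hp.two_le; omega
  obtain ⟨c, hctop, hsmall'⟩ : ∃ c, etaUp p G c = ⊤ ∧ c < p :=
    ⟨pwc p G, Nat.sInf_mem (eta_reaches hp hG), hsmall⟩
  clear hsmall
  obtain ⟨n₀, hn₀⟩ := Subgroup.nilpotent_iff_lowerCentralSeries.mp (IsPGroup.isNilpotent hG)
  obtain ⟨s₀, hs₀⟩ := exists_lamIter_bot hp hG (X := (⊤ : Subgroup G)) inferInstance
  set M : ℕ → Subgroup G := fun i => ⨆ j : Fin (c + 1), (lam p)^[i + (j : ℕ) - c] (etaUp p G j)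
    with hMdef
  have hMnormal : ∀ i, (M i).Normal := fun i =>
    PFAux.iSup_normal fun j => lamIter_normal (etaUp_normal p G j) _
  refine ⟨c + s₀, M, ?_, ?_, ?_, hMnormal, ?_, ?_⟩
  · -- M 0 = ⊤
    refine le_antisymm le_top ?_
    have h0 : (0 + (c : ℕ) - c) = 0 := by omega
    have : (lam p)^[0 + (c : ℕ) - c] (etaUp p G c) = ⊤ := by rw [h0]; exact hctop
    calc (⊤ : Subgroup G) = (lam p)^[0 + (c : ℕ) - c] (etaUp p G c) := this.symm
      _ ≤ M 0 := le_iSup_of_le (⟨c, by omega⟩ : Fin (c + 1)) le_rfl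
  · -- M (c + s₀) = ⊥
    refine le_antisymm ?_ bot_le
    refine iSup_le fun j => ?_
    have h1 : (lam p)^[c + s₀ + (j : ℕ) - c] (etaUp p G j)
        ≤ (lam p)^[c + s₀ + (j : ℕ) - c] ⊤ := lamIter_mono le_top _
    have h2 : (lam p)^[c + s₀ + (j : ℕ) - c] (⊤ : Subgroup G) ≤ (lam p)^[s₀] ⊤ :=
      lamIter_antitone inferInstance (by omega)
    exact le_trans h1 (le_trans h2 (le_of_eq hs₀))
  · -- descending
    intro i
    refine iSup_le fun j => ?_
    refine le_iSup_of_le j (lamIter_antitone (etaUp_normal p G j) (by omega))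
  · -- central series
    intro i
    refine commutator_top_iSup_le (hMnormal (i + 1)) fun j => ?_
    have h1 : ⁅(lam p)^[i + (j : ℕ) - c] (etaUp p G j), (⊤ : Subgroup G)⁆
        ≤ (lam p)^[(i + (j : ℕ) - c) + 1] (etaUp p G j) := by
      rw [Function.iterate_succ_apply']
      exact le_sup_right
    refine le_trans h1 ?_
    refine le_iSup_of_le j (lamIter_antitone (etaUp_normal p G j) (by omega))
  · -- potent condition
    intro i
    refine le_trans (itComm_iSup_le
      (f := fun j : Fin (c + 1) => (lam p)^[i + (j : ℕ) - c] (etaUp p G (j : ℕ)))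
      (fun j => lamIter_normal (etaUp_normal p G (j : ℕ)) _) (p - 1)) ?_
    refine iSup_le fun j => ?_
    refine le_trans (ML hpk hn₀ (i + (j : ℕ) - c) j (p - 1)) ?_
    have hjc : (j : ℕ) ≤ c := Nat.lt_succ_iff.mp j.isLt
    refine sup_le (iSup_le fun r => ?_) ?_
    · have hrj : (r : ℕ) ≤ (j : ℕ) := Nat.lt_succ_iff.mp r.isLt
      refine pPow_mono ?_
      show _ ≤ ⨆ j' : Fin (c + 1), (lam p)^[(i + 1) + (j' : ℕ) - c] (etaUp p G (j' : ℕ))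
      refine le_trans
        (lamIter_antitone (etaUp_normal p G (r : ℕ)) (show (i + 1) + (r : ℕ) - c ≤ _ by omega))
        (le_iSup_of_le (⟨(r : ℕ), by omega⟩ : Fin (c + 1)) le_rfl)
    · have hzero : (j : ℕ) - (p - 1) - (i + (j : ℕ) - c) = 0 := by omega
      rw [hzero]
      have : etaUp p G 0 = (⊥ : Subgroup G) := rfl
      rw [this]
      exact bot_le
end

section
/- Let p be an odd prime and G a nonabelian group of order p^3. If G has exponent p, then η(G) = Z(G); if G has exponent p^2, then G is powerful and η(G) = G. -/

lemma pPow_eq_bot_of_exp {G : Type*} [Group G] {p : ℕ} (h : ∀ x : G, x ^ p = 1)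
    (N : Subgroup G) : pPow p N = ⊥ := by
  rw [pPow, ← Subgroup.closure_singleton_one]
  apply le_antisymm
  · rw [Subgroup.closure_le]
    rintro - ⟨n, hn, rfl⟩
    simp [h n]
  · exact Subgroup.closure_mono (by rintro x rfl; exact ⟨1, N.one_mem, by simp [h]⟩)

/-- for a nonabelian group of order `p³`: if it has exponent `p` then
`η(G) = Z(G)`; if it has exponent `p²` then `G` is powerful and `η(G) = G`. -/
theorem eta_of_order_p_cubed {p : ℕ} (hp : p.Prime) (hodd : Odd p)
    {G : Type*} [Group G] [Finite G] (hcard : Nat.card G = p ^ 3)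
    (hna : ¬ ∀ a b : G, a * b = b * a) :
    (Monoid.exponent G = p → etaUp p G 1 = Subgroup.center G) ∧
      (Monoid.exponent G = p ^ 2 →
        ⁅(⊤ : Subgroup G), (⊤ : Subgroup G)⁆ ≤ pPow p (⊤ : Subgroup G) ∧
          etaUp p G 1 = ⊤) := by
  constructor
  · -- exponent p case
    intro hexp
    have hpow : ∀ x : G, x ^ p = 1 := fun x => hexp ▸ Monoid.pow_exponent_eq_one x
    show sSup {N : Subgroup G | N.Normal ∧ ⁅N, (⊤ : Subgroup G)⁆ ≤ pPow p N ⊔ etaUp p G 0}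
      = Subgroup.center G
    apply le_antisymm
    · apply sSup_le
      rintro N ⟨hNn, hNc⟩
      rw [pPow_eq_bot_of_exp hpow] at hNc
      simp only [etaUp, sup_bot_eq, le_bot_iff] at hNc
      intro n hn
      rw [Subgroup.mem_center_iff]
      intro g
      have := (Subgroup.commutator_le.mp hNc.le) n hn g (Subgroup.mem_top g)
      rw [Subgroup.mem_bot, commutatorElement_def] at this
      have h2 : n * g * n⁻¹ = g := by
        have := mul_eq_one_iff_eq_inv.mp this
        group at this ⊢
        rw [this]
      calc g * n = (n * g * n⁻¹) * n := by rw [h2]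
        _ = n * g := by group
    · apply le_sSup
      refine ⟨inferInstance, ?_⟩
      refine le_trans ?_ le_sup_left
      rw [Subgroup.commutator_le]
      intro g₁ hg₁ g₂ _
      have : g₁ * g₂ = g₂ * g₁ := (Subgroup.mem_center_iff.mp hg₁ g₂).symm
      rw [pPow_eq_bot_of_exp hpow, Subgroup.mem_bot, commutatorElement_def]
      rw [this]; group
  · -- exponent p² case
    intro hexp
    haveI : Fact p.Prime := ⟨hp⟩
    set H := pPow p (⊤ : Subgroup G) with hH
    haveI hHn : H.Normal := pPow_normal p inferInstance
    -- H is nontrivial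
    have hHne : H ≠ ⊥ := by
      intro hb
      have hpow : ∀ x : G, x ^ p = 1 := by
        intro x
        have hx : x ^ p ∈ H := Subgroup.subset_closure ⟨x, Subgroup.mem_top x, rfl⟩
        rw [hb, Subgroup.mem_bot] at hx
        exact hx
      have hdvd : Monoid.exponent G ∣ p := Monoid.exponent_dvd_of_forall_pow_eq_one hpow
      rw [hexp] at hdvd
      have hple := Nat.le_of_dvd hp.pos hdvd
      have : p < p ^ 2 := by
        calc p = p ^ 1 := (pow_one p).symm
          _ < p ^ 2 := Nat.pow_lt_pow_right hp.one_lt one_lt_two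
      omega
    -- the quotient is small and hence abelian
    have hcardmul : Nat.card G = Nat.card (G ⧸ H) * Nat.card H :=
      Subgroup.card_eq_card_quotient_mul_card_subgroup H
    have hHgt : 1 < Nat.card H := H.one_lt_card_iff_ne_bot.mpr hHne
    have hQdvd : Nat.card (G ⧸ H) ∣ p ^ 3 := by
      rw [← hcard, hcardmul]; exact Dvd.intro _ rfl
    obtain ⟨a, ha3, hQa⟩ := (Nat.dvd_prime_pow hp).mp hQdvd
    have ha2 : a ≤ 2 := by
      by_contra h
      have ha : a = 3 := by omega
      have h3 : p ^ 3 = p ^ 3 * Nat.card H := by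
        conv_lhs => rw [← hcard, hcardmul, hQa, ha]
      have hlt := (Nat.mul_lt_mul_left (pow_pos hp.pos 3)).mpr hHgt
      omega
    have hcomm : ∀ x y : G ⧸ H, x * y = y * x := by
      interval_cases a
      · have : Nat.card (G ⧸ H) = 1 := by simpa using hQa
        haveI : Subsingleton (G ⧸ H) := Nat.card_eq_one_iff_unique.mp this |>.1
        intro x y; exact Subsingleton.elim _ _
      · have hc : Nat.card (G ⧸ H) = p := by simpa using hQa
        haveI := isCyclic_of_prime_card hc
        exact fun x y => (IsCyclic.commGroup (α := G ⧸ H)).mul_comm x y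
      · exact IsPGroup.commutative_of_card_eq_prime_sq hQa
    have hle : ⁅(⊤ : Subgroup G), (⊤ : Subgroup G)⁆ ≤ H := by
      rw [Subgroup.commutator_le]
      intro g₁ _ g₂ _
      rw [← QuotientGroup.eq_one_iff, commutatorElement_def]
      have h1 : ((g₁ * g₂ * g₁⁻¹ * g₂⁻¹ : G) : G ⧸ H)
          = (g₁ : G ⧸ H) * g₂ * (g₁ : G ⧸ H)⁻¹ * (g₂ : G ⧸ H)⁻¹ := by
        rfl
      rw [h1]
      rw [hcomm (g₁ : G ⧸ H) (g₂ : G ⧸ H)]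
      group
    refine ⟨hle, ?_⟩
    show sSup {N : Subgroup G | N.Normal ∧ ⁅N, (⊤ : Subgroup G)⁆ ≤ pPow p N ⊔ etaUp p G 0} = ⊤
    rw [eq_top_iff]
    apply le_sSup
    exact ⟨inferInstance, le_trans hle le_sup_left⟩
end
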